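/- Let $n,r,k,t,a$ be positive integers with $k\ge2$, $t+2\le r\le n$ and $t+1\le a\le n$, and define $f(n,r,k,a,t)=(a-t)\binom{n-t-1}{r-t-1}k^{r-t-1}-\binom{a-t}{2}\binom{n-t-2}{r-t-2}k^{r-t-2}$. For $b\in\{t+1,\dots,a\}$ let $\mathcal{N}_b=\{F\in\mathcal{L}_{n,r,k}: M_t\subseteq F,\ |F\cap M_a|=b\}$. Then $f(n,r,k,a,t)=\sum_{i=1}^{a-t}\frac{3i-i^2}{2}\,|\mathcal{N}_{t+i}|$. -/

import Mathlib

open Finset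

attribute [local instance] Classical.propDecidable

/-- The ground set `[n] × [k]`. -/
def box (n k : ℕ) : Finset (ℕ × ℕ) := Finset.Icc 1 n ×ˢ Finset.Icc 1 k

/-- A `k`-signed set on `[n]`: a subset of `[n] × [k]` with pairwise distinct first coordinates. -/
def IsSigned (n k : ℕ) (T : Finset (ℕ × ℕ)) : Prop :=
  T ⊆ box n k ∧ (T.image Prod.fst).card = T.card

/-- `L n r k`: the collection of `k`-signed `r`-sets on `[n]`. -/
def L (n r k : ℕ) : Finset (Finset (ℕ × ℕ)) :=
  (box n k).powerset.filter (fun F => F.card = r ∧ (F.image Prod.fst).card = r)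

/-- A family is `t`-intersecting if any two members meet in at least `t` elements. -/
def IsTIntersecting (t : ℕ) (F : Finset (Finset (ℕ × ℕ))) : Prop :=
  ∀ A ∈ F, ∀ B ∈ F, t ≤ (A ∩ B).card

/-- `T` is a `t`-cover of the family `F`: a `k`-signed set meeting every member in ≥ `t` points. -/
def IsTCover (n k t : ℕ) (F : Finset (Finset (ℕ × ℕ))) (T : Finset (ℕ × ℕ)) : Prop :=
  IsSigned n k T ∧ ∀ A ∈ F, t ≤ (T ∩ A).card

/-- `F` is a maximal `t`-intersecting subfamily of `L n r k`. -/
def IsMaximalTIntersecting (n r k t : ℕ) (F : Finset (Finset (ℕ × ℕ))) : Prop :=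
  F ⊆ L n r k ∧ IsTIntersecting t F ∧
    ∀ G ⊆ L n r k, IsTIntersecting t G → F ⊆ G → G = F

/-- A `t`-intersecting family is trivial if all members contain a fixed `k`-signed `t`-set. -/
def IsTrivial (n k t : ℕ) (F : Finset (Finset (ℕ × ℕ))) : Prop :=
  ∃ T, IsSigned n k T ∧ T.card = t ∧ ∀ A ∈ F, T ⊆ A

/-- `Msig d = {(1,1),(2,1),…,(d,1)}`. -/
def Msig (d : ℕ) : Finset (ℕ × ℕ) := (Finset.Icc 1 d).image (fun x => (x, 1))

/-- The family `H₁(n,r,k,ℓ,t)`. -/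
def H1 (n r k l t : ℕ) : Finset (Finset (ℕ × ℕ)) :=
  (L n r k).filter (fun F =>
    (Msig t ⊆ F ∧ t + 1 ≤ (F ∩ Msig l).card) ∨
    (¬ Msig t ⊆ F ∧ (F ∩ Msig l).card = l - 1))

/-- The family `H₂(n,r,k,c,t)`. -/
def H2 (n r k c t : ℕ) : Finset (Finset (ℕ × ℕ)) :=
  (L n r k).filter (fun F =>
    (Msig t ⊆ F ∧ t + 1 ≤ (F ∩ Msig r).card) ∨
    (F ∩ Msig r = Msig t ∧ Msig c \ Msig r ⊆ F) ∨
    (¬ Msig t ⊆ F ∧ (F ∩ Msig r).card = r - 1 ∧ (F ∩ (Msig c \ Msig r)).card = 1))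

/-- The set of all `t`-covers of `F` of size `t+1`. -/
noncomputable def TauSet (n k t : ℕ) (F : Finset (Finset (ℕ × ℕ))) : Finset (Finset (ℕ × ℕ)) :=
  (box n k).powerset.filter (fun T => IsTCover n k t F T ∧ T.card = t + 1)

def signedOn (C : Finset ℕ) (k m : ℕ) : Finset (Finset (ℕ × ℕ)) :=
  ((C ×ˢ Finset.Icc 1 k).powerset).filter (fun F => F.card = m ∧ (F.image Prod.fst).card = m)

lemma card_fiber (C : Finset ℕ) (k m : ℕ) (A : Finset ℕ) (hA : A ∈ C.powersetCard m) :
    (((signedOn C k m)).filter (fun F => F.image Prod.fst = A)).card = k ^ m := by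
  classical
  obtain ⟨hAC, hAcard⟩ := Finset.mem_powersetCard.mp hA
  have hpi : (A.pi (fun _ => Finset.Icc 1 k)).card = k ^ m := by
    rw [Finset.card_pi, Finset.prod_const, Nat.card_Icc, hAcard]; simp
  rw [← hpi]
  refine (Finset.card_bij (fun g _ => A.attach.image (fun x => (x.1, g x.1 x.2))) ?_ ?_ ?_).symm
  · intro g hg
    have hg' := Finset.mem_pi.mp hg
    have hinj : Set.InjOn (fun x : {x // x ∈ A} => (x.1, g x.1 x.2)) A.attach := by
      intro x _ y _ hxy
      exact Subtype.ext (congrArg Prod.fst hxy)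
    have hcard : (A.attach.image (fun x => (x.1, g x.1 x.2))).card = m := by
      rw [Finset.card_image_of_injOn hinj, Finset.card_attach, hAcard]
    have himg : (A.attach.image (fun x => (x.1, g x.1 x.2))).image Prod.fst = A := by
      rw [Finset.image_image]
      exact Finset.attach_image_val (s := A)
    rw [Finset.mem_filter]
    refine ⟨Finset.mem_filter.mpr ⟨Finset.mem_powerset.mpr ?_, hcard, by rw [himg, hAcard]⟩, himg⟩
    intro p hp
    obtain ⟨x, hx, rfl⟩ := Finset.mem_image.mp hp
    exact Finset.mem_product.mpr ⟨hAC x.2, hg' x.1 x.2⟩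
  · intro g hg g' hg' heq
    funext x hx
    have : ((x, g x hx) : ℕ × ℕ) ∈ A.attach.image (fun y => (y.1, g' y.1 y.2)) := by
      rw [← heq]
      exact Finset.mem_image.mpr ⟨⟨x, hx⟩, Finset.mem_attach _ _, rfl⟩
    obtain ⟨y, _, hy⟩ := Finset.mem_image.mp this
    have h1 : y.1 = x := congrArg Prod.fst hy
    have h2 := congrArg Prod.snd hy
    simp only at h2
    subst h1
    exact h2.symm
  · intro F hF
    rw [Finset.mem_filter] at hF
    obtain ⟨hF1, hFA⟩ := hF
    rw [signedOn, Finset.mem_filter, Finset.mem_powerset] at hF1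
    obtain ⟨hFsub, hFcard, hFimg⟩ := hF1
    have hex : ∀ x ∈ A, ∃ b, (x, b) ∈ F := by
      intro x hx
      rw [← hFA] at hx
      obtain ⟨p, hp, hp1⟩ := Finset.mem_image.mp hx
      exact ⟨p.2, by rw [← hp1]; exact hp⟩
    refine ⟨fun x hx => (hex x hx).choose, Finset.mem_pi.mpr ?_, ?_⟩
    · intro x hx
      have := (hex x hx).choose_spec
      exact (Finset.mem_product.mp (hFsub this)).2
    · -- image equals F
      have hsub : A.attach.image (fun x => (x.1, (hex x.1 x.2).choose)) ⊆ F := by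
        intro p hp
        obtain ⟨x, _, rfl⟩ := Finset.mem_image.mp hp
        exact (hex x.1 x.2).choose_spec
      apply Finset.eq_of_subset_of_card_le hsub
      rw [hFcard]
      have hinj : Set.InjOn (fun x : {x // x ∈ A} => (x.1, (hex x.1 x.2).choose)) A.attach := by
        intro x _ y _ hxy
        exact Subtype.ext (congrArg Prod.fst hxy)
      rw [Finset.card_image_of_injOn hinj, Finset.card_attach, hAcard]

lemma card_signedOn (C : Finset ℕ) (k m : ℕ) :
    (signedOn C k m).card = C.card.choose m * k ^ m := by
  classical
  rw [Finset.card_eq_sum_card_fiberwise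
    (f := fun F => F.image Prod.fst) (t := C.powersetCard m) ?_]
  · rw [Finset.sum_congr rfl (fun A hA => card_fiber C k m A hA), Finset.sum_const,
      Finset.card_powersetCard, smul_eq_mul]
  · intro F hF
    simp only [Finset.mem_coe, signedOn, Finset.mem_filter, Finset.mem_powerset] at hF
    exact Finset.mem_powersetCard.mpr ⟨fun x hx => by
      obtain ⟨p, hp, rfl⟩ := Finset.mem_image.mp hx
      exact (Finset.mem_product.mp (hF.1 hp)).1, hF.2.2⟩

lemma card_superset (n r k s : ℕ) (S : Finset (ℕ × ℕ)) (hSbox : S ⊆ box n k)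
    (hSsig : (S.image Prod.fst).card = S.card) (hScard : S.card = s) (hsr : s ≤ r) :
    ((L n r k).filter (fun F => S ⊆ F)).card = (n - s).choose (r - s) * k ^ (r - s) := by
  classical
  have himgcard : (S.image Prod.fst).card = s := by rw [hSsig, hScard]
  have himgsub : S.image Prod.fst ⊆ Finset.Icc 1 n := by
    intro x hx
    obtain ⟨p, hp, rfl⟩ := Finset.mem_image.mp hx
    exact (Finset.mem_product.mp (hSbox hp)).1
  have hCcard : (Finset.Icc 1 n \ S.image Prod.fst).card = n - s := by
    rw [Finset.card_sdiff_of_subset himgsub, Nat.card_Icc, himgcard]; simp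
  rw [← hCcard, ← card_signedOn (Finset.Icc 1 n \ S.image Prod.fst) k (r - s)]
  apply Finset.card_bij' (fun F _ => F \ S) (fun G _ => G ∪ S)
  · -- F \ S ∈ signedOn
    intro F hF
    rw [Finset.mem_filter] at hF
    obtain ⟨hFL, hSF⟩ := hF
    rw [L, Finset.mem_filter, Finset.mem_powerset] at hFL
    obtain ⟨hFbox, hFcard, hFimg⟩ := hFL
    have hinjF : Set.InjOn Prod.fst (F : Set (ℕ × ℕ)) := Finset.injOn_of_card_image_eq (by rw [hFimg, hFcard])
    have hcard : (F \ S).card = r - s := by rw [Finset.card_sdiff_of_subset hSF, hFcard, hScard]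
    rw [signedOn, Finset.mem_filter, Finset.mem_powerset]
    refine ⟨?_, hcard, ?_⟩
    · intro p hp
      obtain ⟨hpF, hpS⟩ := Finset.mem_sdiff.mp hp
      refine Finset.mem_product.mpr ⟨Finset.mem_sdiff.mpr ⟨(Finset.mem_product.mp (hFbox hpF)).1, ?_⟩,
        (Finset.mem_product.mp (hFbox hpF)).2⟩
      intro hcon
      obtain ⟨q, hq, hq1⟩ := Finset.mem_image.mp hcon
      exact hpS (hinjF (hSF hq) hpF hq1 ▸ hq)
    · rw [← hcard]
      exact Finset.card_image_of_injOn (hinjF.mono (by exact_mod_cast Finset.sdiff_subset))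
  · -- G ∪ S ∈ filter
    intro G hG
    rw [signedOn, Finset.mem_filter, Finset.mem_powerset] at hG
    obtain ⟨hGsub, hGcard, hGimg⟩ := hG
    have hdisj : Disjoint G S := by
      rw [Finset.disjoint_left]
      intro p hpG hpS
      have := (Finset.mem_product.mp (hGsub hpG)).1
      exact (Finset.mem_sdiff.mp this).2 (Finset.mem_image.mpr ⟨p, hpS, rfl⟩)
    have hdisjimg : Disjoint (G.image Prod.fst) (S.image Prod.fst) := by
      rw [Finset.disjoint_left]
      intro x hxG hxS
      obtain ⟨p, hp, rfl⟩ := Finset.mem_image.mp hxG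
      exact (Finset.mem_sdiff.mp (Finset.mem_product.mp (hGsub hp)).1).2 hxS
    rw [Finset.mem_filter, L, Finset.mem_filter, Finset.mem_powerset]
    refine ⟨⟨?_, ?_, ?_⟩, Finset.subset_union_right⟩
    · intro p hp
      rcases Finset.mem_union.mp hp with h | h
      · have := Finset.mem_product.mp (hGsub h)
        exact Finset.mem_product.mpr ⟨(Finset.mem_sdiff.mp this.1).1, this.2⟩
      · exact hSbox h
    · rw [Finset.card_union_of_disjoint hdisj, hGcard, hScard, Nat.sub_add_cancel hsr]
    · rw [Finset.image_union, Finset.card_union_of_disjoint hdisjimg, hGimg, himgcard,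
        Nat.sub_add_cancel hsr]
  · intro F hF
    exact Finset.sdiff_union_of_subset (Finset.mem_filter.mp hF).2
  · intro G hG
    rw [signedOn, Finset.mem_filter, Finset.mem_powerset] at hG
    apply Finset.union_sdiff_cancel_right
    rw [Finset.disjoint_left]
    intro p hpG hpS
    have := (Finset.mem_product.mp (hG.1 hpG)).1
    exact (Finset.mem_sdiff.mp this).2 (Finset.mem_image.mpr ⟨p, hpS, rfl⟩)

lemma mem_Msig {d : ℕ} {p : ℕ × ℕ} : p ∈ Msig d ↔ p.1 ∈ Finset.Icc 1 d ∧ p.2 = 1 := by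
  simp only [Msig, Finset.mem_image]
  constructor
  · rintro ⟨x, hx, rfl⟩; exact ⟨hx, rfl⟩
  · rintro ⟨h1, h2⟩; exact ⟨p.1, h1, by rw [← h2]⟩

lemma Msig_image_fst (d : ℕ) : (Msig d).image Prod.fst = Finset.Icc 1 d := by
  rw [Msig, Finset.image_image]; exact Finset.image_id

lemma Msig_card (d : ℕ) : (Msig d).card = d := by
  rw [Msig, Finset.card_image_of_injective _ (fun x y h => (Prod.ext_iff.mp h).1)]
  simp

lemma Msig_signed (d : ℕ) : ((Msig d).image Prod.fst).card = (Msig d).card := by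
  rw [Msig_image_fst, Msig_card]; simp

lemma Msig_subset_box {d n k : ℕ} (hd : d ≤ n) (hk : 1 ≤ k) : Msig d ⊆ box n k := by
  intro p hp
  rw [mem_Msig] at hp
  rw [Finset.mem_Icc] at hp
  exact Finset.mem_product.mpr ⟨Finset.mem_Icc.mpr ⟨hp.1.1, hp.1.2.trans hd⟩,
    Finset.mem_Icc.mpr ⟨by omega, by omega⟩⟩

lemma Msig_mono {t a : ℕ} (h : t ≤ a) : Msig t ⊆ Msig a :=
  Finset.image_subset_image (Finset.Icc_subset_Icc_right h)

theorem f_as_weighted_sum (n r k t a : ℕ) (hn : 0 < n) (ht : 0 < t)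
    (hk : 2 ≤ k) (htr : t + 2 ≤ r) (hrn : r ≤ n) (hta : t + 1 ≤ a) (han : a ≤ n) :
    ((a - t : ℕ) : ℚ) * (n - t - 1).choose (r - t - 1) * (k : ℚ) ^ (r - t - 1) -
        ((a - t : ℕ).choose 2 : ℚ) * (n - t - 2).choose (r - t - 2) * (k : ℚ) ^ (r - t - 2) =
      ∑ i ∈ Finset.Icc 1 (a - t),
        ((3 * (i : ℚ) - (i : ℚ) ^ 2) / 2) *
          ((L n r k).filter (fun F => Msig t ⊆ F ∧ (F ∩ Msig a).card = t + i)).card := by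
  classical
  set D := Msig a \ Msig t with hD
  have hk1 : 1 ≤ k := by omega
  have hta' : t ≤ a := by omega
  have hDcard : D.card = a - t := by
    rw [hD, Finset.card_sdiff_of_subset (Msig_mono hta'), Msig_card, Msig_card]
  set 𝒜 := (L n r k).filter (fun F => Msig t ⊆ F) with hA
  -- every F in 𝒜 has fst-inj and intersection decomposition
  have hdecomp : ∀ F ∈ 𝒜, (F ∩ Msig a).card = t + (F ∩ D).card := by
    intro F hF
    have hMF : Msig t ⊆ F := (Finset.mem_filter.mp hF).2
    have h1 : F ∩ Msig a = Msig t ∪ (F ∩ D) := by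
      conv_lhs => rw [← Finset.union_sdiff_of_subset (Msig_mono hta')]
      rw [Finset.inter_union_distrib_left, Finset.inter_eq_right.mpr hMF]
    have h2 : Disjoint (Msig t) (F ∩ D) :=
      Finset.disjoint_left.mpr (fun p hp hpFD =>
        (Finset.mem_sdiff.mp (Finset.mem_inter.mp hpFD).2).2 hp)
    rw [h1, Finset.card_union_of_disjoint h2, Msig_card]
  -- rewrite RHS fibers
  have hfiber : ∀ i : ℕ,
      (L n r k).filter (fun F => Msig t ⊆ F ∧ (F ∩ Msig a).card = t + i) =
        𝒜.filter (fun F => (F ∩ D).card = i) := by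
    intro i
    rw [hA, Finset.filter_filter]
    apply Finset.filter_congr
    intro F hF
    constructor
    · rintro ⟨h1, h2⟩
      refine ⟨h1, ?_⟩
      have := hdecomp F (Finset.mem_filter.mpr ⟨hF, h1⟩)
      omega
    · rintro ⟨h1, h2⟩
      refine ⟨h1, ?_⟩
      have := hdecomp F (Finset.mem_filter.mpr ⟨hF, h1⟩)
      omega
  have hcardinter : ∀ F : Finset (ℕ × ℕ), (F ∩ D).card = ∑ x ∈ D, if x ∈ F then 1 else 0 := by
    intro F
    rw [Finset.inter_comm, ← Finset.filter_mem_eq_inter, Finset.card_filter]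
  -- facts about elements of D
  have hxD : ∀ x ∈ D, x.2 = 1 ∧ x.1 ∈ Finset.Icc (t+1) a := by
    intro x hx
    rw [hD, Finset.mem_sdiff, mem_Msig, mem_Msig, Finset.mem_Icc, Finset.mem_Icc] at hx
    refine ⟨hx.1.2, Finset.mem_Icc.mpr ⟨?_, hx.1.1.2⟩⟩
    by_contra hc
    exact hx.2 ⟨⟨hx.1.1.1, by omega⟩, hx.1.2⟩
  -- Step 4
  have step4 : ∑ F ∈ 𝒜, (F ∩ D).card =
      (a - t) * ((n - (t+1)).choose (r - (t+1)) * k ^ (r - (t+1))) := by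
    have hswap : ∑ F ∈ 𝒜, (F ∩ D).card = ∑ x ∈ D, (𝒜.filter (fun F => x ∈ F)).card := by
      simp_rw [hcardinter, Finset.card_filter]
      exact Finset.sum_comm
    have hterm : ∀ x ∈ D, (𝒜.filter (fun F => x ∈ F)).card =
        (n - (t+1)).choose (r - (t+1)) * k ^ (r - (t+1)) := by
      intro x hx
      obtain ⟨hx2, hx1⟩ := hxD x hx
      rw [Finset.mem_Icc] at hx1
      have hxnott : x ∉ Msig t := by
        rw [mem_Msig, Finset.mem_Icc]; omega
      have hfilt : 𝒜.filter (fun F => x ∈ F) =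
          (L n r k).filter (fun F => insert x (Msig t) ⊆ F) := by
        rw [hA, Finset.filter_filter]
        apply Finset.filter_congr
        intro F _
        rw [Finset.insert_subset_iff, and_comm]
      rw [hfilt]
      apply card_superset n r k (t+1) (insert x (Msig t))
      · rw [Finset.insert_subset_iff]
        exact ⟨Msig_subset_box han hk1 (Finset.mem_sdiff.mp hx).1,
          Msig_subset_box (by omega) hk1⟩
      · rw [Finset.image_insert, Msig_image_fst,
          Finset.card_insert_of_notMem (by rw [Finset.mem_Icc]; omega),
          Finset.card_insert_of_notMem hxnott, Msig_card, Nat.card_Icc]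
        simp
      · rw [Finset.card_insert_of_notMem hxnott, Msig_card]
      · omega
    rw [hswap, Finset.sum_congr rfl hterm, Finset.sum_const, smul_eq_mul, hDcard]
  -- Step 5
  have step5 : ∑ F ∈ 𝒜, ((F ∩ D).card).choose 2 =
      (a - t).choose 2 * ((n - (t+2)).choose (r - (t+2)) * k ^ (r - (t+2))) := by
    have hchoose : ∀ F : Finset (ℕ × ℕ),
        ((F ∩ D).card).choose 2 = ∑ P ∈ D.powersetCard 2, if P ⊆ F then 1 else 0 := by
      intro F
      rw [← Finset.card_filter]
      rw [← Finset.card_powersetCard 2 (F ∩ D)]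
      congr 1
      ext P
      rw [Finset.mem_powersetCard, Finset.mem_filter, Finset.mem_powersetCard,
        Finset.subset_inter_iff]
      tauto
    have hswap : ∑ F ∈ 𝒜, ((F ∩ D).card).choose 2 =
        ∑ P ∈ D.powersetCard 2, (𝒜.filter (fun F => P ⊆ F)).card := by
      simp_rw [hchoose, Finset.card_filter]
      exact Finset.sum_comm
    have hterm : ∀ P ∈ D.powersetCard 2, (𝒜.filter (fun F => P ⊆ F)).card =
        (n - (t+2)).choose (r - (t+2)) * k ^ (r - (t+2)) := by
      intro P hP
      obtain ⟨hPD, hPcard⟩ := Finset.mem_powersetCard.mp hP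
      have hPdisj : Disjoint (Msig t) P := Finset.disjoint_left.mpr (fun p hp hpP =>
        (Finset.mem_sdiff.mp (hPD hpP)).2 hp)
      have hfilt : 𝒜.filter (fun F => P ⊆ F) =
          (L n r k).filter (fun F => Msig t ∪ P ⊆ F) := by
        rw [hA, Finset.filter_filter]
        apply Finset.filter_congr
        intro F _
        rw [Finset.union_subset_iff]
      have himgP : P.image Prod.fst ⊆ Finset.Icc (t+1) a := by
        intro c hc
        obtain ⟨p, hp, rfl⟩ := Finset.mem_image.mp hc
        exact (hxD p (hPD hp)).2
      have hPinj : (P.image Prod.fst).card = 2 := by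
        rw [← hPcard]
        apply Finset.card_image_of_injOn
        intro p hp q hq hpq
        have h1 := (hxD p (hPD hp)).1
        have h2 := (hxD q (hPD hq)).1
        exact Prod.ext hpq (h1.trans h2.symm)
      rw [hfilt]
      apply card_superset n r k (t+2) (Msig t ∪ P)
      · exact Finset.union_subset (Msig_subset_box (by omega) hk1)
          (fun p hp => Msig_subset_box han hk1 (Finset.mem_sdiff.mp (hPD hp)).1)
      · rw [Finset.image_union, Msig_image_fst,
          Finset.card_union_of_disjoint (Finset.disjoint_left.mpr (fun c hc hc2 => by
            have := himgP hc2
            rw [Finset.mem_Icc] at hc this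
            omega)),
          Finset.card_union_of_disjoint hPdisj, Msig_card, hPcard, hPinj, Nat.card_Icc]
        simp
      · rw [Finset.card_union_of_disjoint hPdisj, Msig_card, hPcard]
      · omega
    rw [hswap, Finset.sum_congr rfl hterm, Finset.sum_const, smul_eq_mul,
      Finset.card_powersetCard, hDcard]
  -- assemble
  have hbound : ∀ F ∈ 𝒜, (F ∩ D).card ∈ Finset.range (a - t + 1) := by
    intro F _
    rw [Finset.mem_range]
    have := Finset.card_le_card (Finset.inter_subset_right (s₁ := F) (s₂ := D))
    omega
  have key : ∑ F ∈ 𝒜, (((F ∩ D).card : ℚ) - (((F ∩ D).card).choose 2 : ℚ)) =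
      ∑ i ∈ Finset.range (a - t + 1),
        (((i : ℚ) - ((i.choose 2 : ℕ) : ℚ)) * ((𝒜.filter (fun F => (F ∩ D).card = i)).card : ℚ)) := by
    rw [← Finset.sum_fiberwise_of_maps_to hbound
      (fun F => (((F ∩ D).card : ℚ) - (((F ∩ D).card).choose 2 : ℚ)))]
    apply Finset.sum_congr rfl
    intro i _
    rw [Finset.sum_congr rfl (fun F hF => by
      rw [(Finset.mem_filter.mp hF).2]), Finset.sum_const, nsmul_eq_mul, mul_comm]
  have lhs_eq : ∑ F ∈ 𝒜, (((F ∩ D).card : ℚ) - (((F ∩ D).card).choose 2 : ℚ)) =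
      ((a - t : ℕ) : ℚ) * (n - t - 1).choose (r - t - 1) * (k : ℚ) ^ (r - t - 1) -
        ((a - t : ℕ).choose 2 : ℚ) * (n - t - 2).choose (r - t - 2) * (k : ℚ) ^ (r - t - 2) := by
    rw [Finset.sum_sub_distrib]
    have c4 : ∑ F ∈ 𝒜, (((F ∩ D).card : ℕ) : ℚ) = (((a - t) * ((n - (t+1)).choose (r - (t+1)) * k ^ (r - (t+1))) : ℕ) : ℚ) := by
      rw [← step4, Nat.cast_sum]
    have c5 : ∑ F ∈ 𝒜, ((((F ∩ D).card).choose 2 : ℕ) : ℚ) = (((a - t).choose 2 * ((n - (t+2)).choose (r - (t+2)) * k ^ (r - (t+2))) : ℕ) : ℚ) := by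
      rw [← step5, Nat.cast_sum]
    rw [c4, c5]
    push_cast
    have e1 : n - t - 1 = n - (t+1) := by omega
    have e2 : r - t - 1 = r - (t+1) := by omega
    have e3 : n - t - 2 = n - (t+2) := by omega
    have e4 : r - t - 2 = r - (t+2) := by omega
    rw [e1, e2, e3, e4]
    ring
  rw [← lhs_eq, key]
  -- now match RHS sums
  have hzero : ((0 : ℚ) - ((Nat.choose 0 2 : ℕ) : ℚ)) * ((𝒜.filter (fun F => (F ∩ D).card = 0)).card : ℚ) = 0 := by
    norm_num
  have hrange : Finset.range (a - t + 1) = insert 0 (Finset.Icc 1 (a - t)) := by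
    ext i
    simp only [Finset.mem_range, Finset.mem_insert, Finset.mem_Icc]
    omega
  rw [hrange, Finset.sum_insert (by simp)]
  rw [Nat.cast_zero, hzero, zero_add]
  apply Finset.sum_congr rfl
  intro i hi
  rw [hfiber i]
  congr 1
  rw [Nat.cast_choose_two]
  ring
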